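/- Let X ∈ ℝ^{d×n} with n ≥ 1, λ > 0, μ > 0, 0 < p, q < 2, and let (Z_t)_{t≥1} be a sequence in ℝ^{n×n} such that for every t, p·Z_{t+1}M_t + λq·Xᵀ(XZ_{t+1} − X)N_t = 0, where M_t = (Z_tᵀZ_t + μ²I)^{p/2−1} and N_t is the diagonal matrix with (N_t)_{ii} = (‖(XZ_t − X)_i‖_2² + μ²)^{q/2−1}. Set D = J(Z_1, μ) and θ = min{ D^{(p−2)/p}, (D/λ)^{(q−2)/q} } > 0. Then for every t, J(Z_t, μ) − J(Z_{t+1}, μ) ≥ (θ/2)·( p‖Z_t − Z_{t+1}‖_F² + λq‖X(Z_t − Z_{t+1})‖_F² ). -/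

import Mathlib

open Matrix

/-- Real power of a real symmetric matrix, defined through the spectral decomposition
`A = U · diag(λ₁,…,λₙ) · Uᵀ` as `A^r = U · diag(λ₁^r,…,λₙ^r) · Uᵀ`
(junk value `0` if `A` is not symmetric). -/
noncomputable def mpow {n : ℕ} (A : Matrix (Fin n) (Fin n) ℝ) (r : ℝ) :
    Matrix (Fin n) (Fin n) ℝ :=
  if hA : A.IsHermitian then hA.cfc (fun x : ℝ => x ^ r) else 0

/-- The smoothed LRR objective
`J(Z, μ) = Tr((ZᵀZ + μ²I)^{p/2}) + λ·∑ᵢ (‖(XZ − X)ᵢ‖₂² + μ²)^{q/2}`,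
where `(XZ − X)ᵢ` denotes the `i`-th column of `XZ − X`. -/
noncomputable def smoothJ {d n : ℕ} (X : Matrix (Fin d) (Fin n) ℝ) (lam p q : ℝ)
    (Z : Matrix (Fin n) (Fin n) ℝ) (μ : ℝ) : ℝ :=
  (mpow (Zᵀ * Z + μ ^ 2 • (1 : Matrix (Fin n) (Fin n) ℝ)) (p / 2)).trace +
    lam * ∑ i, (∑ j, ((X * Z - X) j i) ^ 2 + μ ^ 2) ^ (q / 2)

variable {n : ℕ}

/-- Tangent line inequality for concave rpow. -/
lemma rpow_tangent {s a b : ℝ} (hs0 : 0 ≤ s) (hs1 : s ≤ 1) (ha : 0 < a) (hb : 0 < b) :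
    b ^ s ≤ a ^ s + s * a ^ (s - 1) * (b - a) := by
  have ht : (-1 : ℝ) ≤ b / a - 1 := by
    have : 0 < b / a := div_pos hb ha
    linarith
  have h := rpow_one_add_le_one_add_mul_self ht hs0 hs1
  rw [add_sub_cancel] at h
  have h2 : (b / a) ^ s * a ^ s ≤ (1 + s * (b / a - 1)) * a ^ s := by
    apply mul_le_mul_of_nonneg_right h (Real.rpow_nonneg ha.le _)
  rw [← Real.mul_rpow (by positivity) ha.le, div_mul_cancel₀ _ ha.ne'] at h2
  calc b ^ s ≤ (1 + s * (b / a - 1)) * a ^ s := h2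
    _ = a ^ s + s * (a ^ s / a) * (b - a) := by field_simp
    _ = a ^ s + s * a ^ (s - 1) * (b - a) := by rw [← Real.rpow_sub_one ha.ne']

lemma trace_mul_conj_diag (U : Matrix (Fin n) (Fin n) ℝ) (g : Fin n → ℝ)
    (B : Matrix (Fin n) (Fin n) ℝ) :
    (B * (U * diagonal g * star U)).trace = ∑ i, (star U * B * U) i i * g i := by
  rw [show B * (U * diagonal g * star U) = (B * U * diagonal g) * star U by
    simp only [Matrix.mul_assoc], trace_mul_comm]
  rw [show star U * (B * U * diagonal g) = (star U * B * U) * diagonal g by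
    simp only [Matrix.mul_assoc]]
  simp [Matrix.trace, Matrix.diag, Matrix.mul_diagonal]

lemma trace_mul_diag_mul_transpose (C : Matrix (Fin n) (Fin n) ℝ) (g : Fin n → ℝ) :
    (C * diagonal g * Cᵀ).trace = ∑ j, ∑ i, g i * (C j i) ^ 2 := by
  set D := C * diagonal g with hD
  have hDe : ∀ j i, D j i = C j i * g i := fun j i => Matrix.mul_diagonal ..
  simp only [Matrix.trace, Matrix.diag, Matrix.mul_apply, Matrix.transpose_apply, hDe, sq]
  exact Finset.sum_congr rfl fun j _ => Finset.sum_congr rfl fun i _ => by ring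

lemma trace_mul_transpose_self (C : Matrix (Fin n) (Fin n) ℝ) :
    (C * Cᵀ).trace = ∑ j, ∑ i, (C j i) ^ 2 := by
  simp [Matrix.trace, Matrix.diag, Matrix.mul_apply, sq]

section herm
variable {A B : Matrix (Fin n) (Fin n) ℝ} (hA : A.IsHermitian) (hB : B.IsHermitian)

lemma cfc_real (f : ℝ → ℝ) :
    hA.cfc f = (hA.eigenvectorUnitary : Matrix (Fin n) (Fin n) ℝ) *
      diagonal (fun i => f (hA.eigenvalues i)) *
      star (hA.eigenvectorUnitary : Matrix (Fin n) (Fin n) ℝ) := by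
  rw [Matrix.IsHermitian.cfc]
  congr 1

lemma diag_real :
    star (hA.eigenvectorUnitary : Matrix (Fin n) (Fin n) ℝ) * A *
      (hA.eigenvectorUnitary : Matrix (Fin n) (Fin n) ℝ) = diagonal hA.eigenvalues := by
  have := hA.conjStarAlgAut_star_eigenvectorUnitary; rw [Unitary.conjStarAlgAut_star_apply] at this
  rw [this]
  congr 1

lemma trace_cfc (f : ℝ → ℝ) : (hA.cfc f).trace = ∑ i, f (hA.eigenvalues i) := by
  have h := trace_mul_conj_diag (hA.eigenvectorUnitary : Matrix (Fin n) (Fin n) ℝ)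
    (fun i => f (hA.eigenvalues i)) 1
  rw [Matrix.mul_one] at h
  rw [cfc_real hA f, ← Matrix.one_mul ((hA.eigenvectorUnitary : Matrix (Fin n) (Fin n) ℝ) * _ * _),
    h, Matrix.UnitaryGroup.star_mul_self]
  simp [Matrix.one_apply]

end herm

section klein
variable {A B : Matrix (Fin n) (Fin n) ℝ} (hA : A.IsHermitian) (hB : B.IsHermitian)

lemma klein (f g : ℝ → ℝ)
    (h : ∀ i j, f (hB.eigenvalues j) ≤ f (hA.eigenvalues i) +
      g (hA.eigenvalues i) * (hB.eigenvalues j - hA.eigenvalues i)) :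
    (hB.cfc f).trace ≤ (hA.cfc f).trace + ((B - A) * hA.cfc g).trace := by
  set U := (hA.eigenvectorUnitary : Matrix (Fin n) (Fin n) ℝ) with hUdef
  set V := (hB.eigenvectorUnitary : Matrix (Fin n) (Fin n) ℝ) with hVdef
  set α := hA.eigenvalues
  set β := hB.eigenvalues
  set W := star V * U with hWdef
  set c : Fin n → Fin n → ℝ := fun j i => (W j i) ^ 2 with hc
  have hUU : star U * U = 1 := Matrix.UnitaryGroup.star_mul_self _
  have hUU' : U * star U = 1 := Matrix.mem_unitaryGroup_iff.mp hA.eigenvectorUnitary.2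
  have hVV : star V * V = 1 := Matrix.UnitaryGroup.star_mul_self _
  have hVV' : V * star V = 1 := Matrix.mem_unitaryGroup_iff.mp hB.eigenvectorUnitary.2
  have hWW : W * star W = 1 := by
    rw [hWdef, Matrix.star_mul, star_star, Matrix.mul_assoc, ← Matrix.mul_assoc U _ _, hUU',
      Matrix.one_mul, hVV]
  have hWW' : star W * W = 1 := by
    rw [hWdef, Matrix.star_mul, star_star, Matrix.mul_assoc, ← Matrix.mul_assoc V _ _, hVV',
      Matrix.one_mul, hUU]
  have hstarW : ∀ i j, (star W) i j = W j i := by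
    intro i j; simp [Matrix.star_eq_conjTranspose, Matrix.conjTranspose_apply]
  have hrow : ∀ j, ∑ i, c j i = 1 := by
    intro j
    have := congrFun (congrFun hWW j) j
    simp only [Matrix.mul_apply, Matrix.one_apply_eq] at this
    rw [← this]
    exact Finset.sum_congr rfl fun i _ => by rw [hstarW]; simp only [hc]; ring
  have hcol : ∀ i, ∑ j, c j i = 1 := by
    intro i
    have := congrFun (congrFun hWW' i) i
    simp only [Matrix.mul_apply, Matrix.one_apply_eq] at this
    rw [← this]
    exact Finset.sum_congr rfl fun j _ => by rw [hstarW]; simp only [hc]; ring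
  -- trace identities
  have T1 : (hB.cfc f).trace = ∑ j, f (β j) := trace_cfc hB f
  have T1' : (hA.cfc f).trace = ∑ i, f (α i) := trace_cfc hA f
  have T2 : (A * hA.cfc g).trace = ∑ i, α i * g (α i) := by
    rw [cfc_real hA g, trace_mul_conj_diag, diag_real hA]
    simp [Matrix.diagonal_apply_eq]
    rfl
  have T3 : (B * hA.cfc g).trace = ∑ i, (∑ j, c j i * β j) * g (α i) := by
    rw [cfc_real hA g, trace_mul_conj_diag]
    refine Finset.sum_congr rfl fun i _ => ?_
    congr 1
    have hdiag : diagonal (RCLike.ofReal ∘ β) = (diagonal β : Matrix (Fin n) (Fin n) ℝ) := by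
      congr 1
    have hBU : star U * B * U = star W * diagonal β * W := by
      conv_lhs => rw [hB.spectral_theorem]
      rw [hdiag, hWdef, Matrix.star_mul, star_star]
      simp only [Unitary.conjStarAlgAut_apply, Matrix.mul_assoc, hVdef]
    rw [hBU]
    set Dm := star W * diagonal β with hDm
    have hd : ∀ a b, Dm a b = (star W) a b * β b := fun a b => Matrix.mul_diagonal ..
    have hentry : (Dm * W) i i = ∑ j, (star W) i j * β j * W j i := by
      simp only [Matrix.mul_apply, hd]
    rw [hentry]
    exact Finset.sum_congr rfl fun j _ => by rw [hstarW]; simp only [hc]; ring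
  have T4 : ((B - A) * hA.cfc g).trace =
      (∑ i, (∑ j, c j i * β j) * g (α i)) - ∑ i, α i * g (α i) := by
    rw [Matrix.sub_mul, Matrix.trace_sub, T2, T3]
  rw [T1, T1', T4]
  have key : ∑ j, f (β j) ≤ ∑ j, ∑ i, c j i * (f (α i) + g (α i) * (β j - α i)) := by
    have : ∀ j, f (β j) = ∑ i, c j i * f (β j) := by
      intro j; rw [← Finset.sum_mul, hrow, one_mul]
    calc ∑ j, f (β j) = ∑ j, ∑ i, c j i * f (β j) :=
          Finset.sum_congr rfl fun j _ => this j
      _ ≤ ∑ j, ∑ i, c j i * (f (α i) + g (α i) * (β j - α i)) := by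
          refine Finset.sum_le_sum fun j _ => Finset.sum_le_sum fun i _ => ?_
          exact mul_le_mul_of_nonneg_left (h i j) (sq_nonneg _)
  refine key.trans (le_of_eq ?_)
  rw [Finset.sum_comm]
  have expand : ∀ i, ∑ j, c j i * (f (α i) + g (α i) * (β j - α i)) =
      f (α i) + ((∑ j, c j i * β j) * g (α i) - α i * g (α i)) := by
    intro i
    have e1 : ∀ j, c j i * (f (α i) + g (α i) * (β j - α i)) =
        c j i * (f (α i) - g (α i) * α i) + (c j i * β j) * g (α i) := fun j => by ring
    rw [Finset.sum_congr rfl fun j _ => e1 j, Finset.sum_add_distrib, ← Finset.sum_mul,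
      ← Finset.sum_mul, hcol i, one_mul]
    ring
  rw [Finset.sum_congr rfl fun i _ => expand i, Finset.sum_add_distrib,
    Finset.sum_sub_distrib]
end klein

section more
variable {A : Matrix (Fin n) (Fin n) ℝ} (hA : A.IsHermitian)

lemma star_eq_t (U : Matrix (Fin n) (Fin n) ℝ) : star U = Uᵀ := by
  rw [Matrix.star_eq_conjTranspose, Matrix.conjTranspose_eq_transpose_of_trivial]

lemma frob_eq {m k : ℕ} (P Q : Matrix (Fin m) (Fin k) ℝ) :
    (Pᵀ * Q).trace = ∑ a, ∑ b, P a b * Q a b := by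
  simp only [Matrix.trace, Matrix.diag, Matrix.mul_apply, Matrix.transpose_apply]
  rw [Finset.sum_comm]

lemma cfcR_const_mul (c : ℝ) (f : ℝ → ℝ) :
    hA.cfc (fun x => c * f x) = c • hA.cfc f := by
  rw [cfc_real, cfc_real]
  have h : (diagonal (fun i => c * f (hA.eigenvalues i)) : Matrix (Fin n) (Fin n) ℝ) =
      c • diagonal (fun i => f (hA.eigenvalues i)) := by
    rw [← Matrix.diagonal_smul]
    rfl
  rw [h, Matrix.mul_smul, Matrix.smul_mul]

lemma cfc_transpose (f : ℝ → ℝ) : (hA.cfc f)ᵀ = hA.cfc f := by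
  have h : (hA.cfc f)ᴴ = hA.cfc f := by
    rw [cfc_real]
    simp only [Matrix.star_eq_conjTranspose, Matrix.conjTranspose_mul,
      Matrix.conjTranspose_conjTranspose, Matrix.diagonal_conjTranspose, Pi.star_def,
      star_trivial, Matrix.mul_assoc]
  rw [← Matrix.conjTranspose_eq_transpose_of_trivial]
  exact h

lemma quad_lower (g : ℝ → ℝ) (θ : ℝ) (hg : ∀ i, θ ≤ g (hA.eigenvalues i))
    (Δ : Matrix (Fin n) (Fin n) ℝ) :
    θ * ∑ j, ∑ i, (Δ j i) ^ 2 ≤ (Δ * hA.cfc g * Δᵀ).trace := by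
  set U := (hA.eigenvectorUnitary : Matrix (Fin n) (Fin n) ℝ) with hU
  have hUU' : U * star U = 1 := Matrix.mem_unitaryGroup_iff.mp hA.eigenvectorUnitary.2
  have h1 : Δ * hA.cfc g * Δᵀ =
      (Δ * U) * diagonal (fun i => g (hA.eigenvalues i)) * (Δ * U)ᵀ := by
    rw [cfc_real hA g, Matrix.transpose_mul, ← star_eq_t U]
    simp only [Matrix.mul_assoc, hU]
  rw [h1, trace_mul_diag_mul_transpose]
  have h2 : ∑ j, ∑ i, ((Δ * U) j i) ^ 2 = ∑ j, ∑ i, (Δ j i) ^ 2 := by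
    rw [← trace_mul_transpose_self, ← trace_mul_transpose_self Δ]
    congr 1
    rw [Matrix.transpose_mul, ← star_eq_t U, ← Matrix.mul_assoc, Matrix.mul_assoc Δ U, hUU',
      Matrix.mul_one]
  rw [← h2, Finset.mul_sum]
  refine Finset.sum_le_sum fun j _ => ?_
  rw [Finset.mul_sum]
  exact Finset.sum_le_sum fun i _ => mul_le_mul_of_nonneg_right (hg i) (sq_nonneg _)

end more

lemma herm_aux (Z : Matrix (Fin n) (Fin n) ℝ) (c : ℝ) :
    (Zᵀ * Z + c • (1 : Matrix (Fin n) (Fin n) ℝ)).IsHermitian := by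
  apply Matrix.IsHermitian.add
  · have := Matrix.isHermitian_conjTranspose_mul_self Z
    rwa [Matrix.conjTranspose_eq_transpose_of_trivial Z] at this
  · unfold Matrix.IsHermitian
    rw [Matrix.conjTranspose_smul, Matrix.conjTranspose_one]
    norm_num

lemma diag_entry_sq (C : Matrix (Fin n) (Fin n) ℝ) (i : Fin n) :
    (Cᵀ * C) i i = ∑ j, (C j i) ^ 2 := by
  simp [Matrix.mul_apply, sq]

lemma eig_lower {Z : Matrix (Fin n) (Fin n) ℝ} {c : ℝ}
    (hA : (Zᵀ * Z + c • (1 : Matrix (Fin n) (Fin n) ℝ)).IsHermitian) (i : Fin n) :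
    c ≤ hA.eigenvalues i := by
  set U := (hA.eigenvectorUnitary : Matrix (Fin n) (Fin n) ℝ) with hU
  have hUU : star U * U = 1 := Matrix.UnitaryGroup.star_mul_self _
  have hdiag := diag_real hA
  have h1 : star U * (Zᵀ * Z + c • (1 : Matrix (Fin n) (Fin n) ℝ)) * U =
      (Z * U)ᵀ * (Z * U) + c • (1 : Matrix (Fin n) (Fin n) ℝ) := by
    rw [Matrix.mul_add, Matrix.add_mul, Matrix.mul_smul, Matrix.mul_one, Matrix.smul_mul, hUU]
    congr 1
    rw [Matrix.transpose_mul, ← star_eq_t U]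
    simp only [Matrix.mul_assoc]
  rw [h1] at hdiag
  have h2 : hA.eigenvalues i = ((Z * U)ᵀ * (Z * U)) i i + c := by
    have := congrFun (congrFun hdiag i) i
    simp only [Matrix.add_apply, Matrix.smul_apply, Matrix.one_apply_eq, smul_eq_mul, mul_one,
      Matrix.diagonal_apply_eq] at this
    linarith [this]
  rw [h2, diag_entry_sq]
  have : (0:ℝ) ≤ ∑ j, ((Z * U) j i) ^ 2 := Finset.sum_nonneg fun j _ => sq_nonneg _
  linarith

lemma mpow_eq {A : Matrix (Fin n) (Fin n) ℝ} (hA : A.IsHermitian) (r : ℝ) :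
    mpow A r = hA.cfc (fun x : ℝ => x ^ r) := dif_pos hA

lemma rpow_lower_bound {D x s : ℝ} (hD : 0 < D) (hx : 0 < x) (hs0 : 0 < s) (hs1 : s ≤ 1)
    (hxe : x ^ s ≤ D) : D ^ ((s - 1) / s) ≤ x ^ (s - 1) := by
  have h2 : x ≤ D ^ (1 / s) := by
    have h := Real.rpow_le_rpow (Real.rpow_nonneg hx.le s) hxe (le_of_lt (by positivity : (0:ℝ) < 1/s))
    rwa [← Real.rpow_mul hx.le, mul_one_div, div_self hs0.ne', Real.rpow_one] at h
  have h3 : (D ^ (1 / s)) ^ (s - 1) ≤ x ^ (s - 1) :=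
    Real.rpow_le_rpow_of_nonpos hx h2 (by linarith)
  have h4 : (D ^ (1 / s)) ^ (s - 1) = D ^ ((s - 1) / s) := by
    rw [← Real.rpow_mul hD.le]
    congr 1
    field_simp
  linarith [h4 ▸ h3]

lemma trace_expand (Z₀ Z₁ M : Matrix (Fin n) (Fin n) ℝ) (hMt : Mᵀ = M) :
    ((Z₀ᵀ * Z₀ - Z₁ᵀ * Z₁) * M).trace =
      ((Z₀ - Z₁) * M * (Z₀ - Z₁)ᵀ).trace + 2 * ((Z₁ * M)ᵀ * (Z₀ - Z₁)).trace := by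
  have hexp : Z₀ᵀ * Z₀ - Z₁ᵀ * Z₁ =
      (Z₀ - Z₁)ᵀ * (Z₀ - Z₁) + (Z₀ - Z₁)ᵀ * Z₁ + Z₁ᵀ * (Z₀ - Z₁) := by
    simp only [Matrix.transpose_sub]
    noncomm_ring
  rw [hexp, Matrix.add_mul, Matrix.add_mul, Matrix.trace_add, Matrix.trace_add]
  have e1 : ((Z₀ - Z₁)ᵀ * (Z₀ - Z₁) * M).trace = ((Z₀ - Z₁) * M * (Z₀ - Z₁)ᵀ).trace :=
    (Matrix.trace_mul_cycle (Z₀ - Z₁) M (Z₀ - Z₁)ᵀ).symm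
  have e2 : ((Z₀ - Z₁)ᵀ * Z₁ * M).trace = ((Z₁ * M)ᵀ * (Z₀ - Z₁)).trace := by
    conv_lhs => rw [← Matrix.trace_transpose]
    simp only [Matrix.transpose_mul, Matrix.transpose_transpose, hMt, Matrix.mul_assoc]
  have e3 : (Z₁ᵀ * (Z₀ - Z₁) * M).trace = ((Z₁ * M)ᵀ * (Z₀ - Z₁)).trace := by
    rw [Matrix.trace_mul_cycle Z₁ᵀ (Z₀ - Z₁) M]
    simp only [Matrix.transpose_mul, hMt, Matrix.mul_assoc]
  rw [e1, e2, e3]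
  ring

lemma coldiff {d : ℕ} (X : Matrix (Fin d) (Fin n) ℝ) (Z₀ Z₁ : Matrix (Fin n) (Fin n) ℝ)
    (μ : ℝ) (i : Fin n) :
    (∑ j, ((X * Z₀ - X) j i) ^ 2 + μ ^ 2) - (∑ j, ((X * Z₁ - X) j i) ^ 2 + μ ^ 2) =
      ∑ j, ((X * (Z₀ - Z₁)) j i) ^ 2 +
        2 * ∑ j, ((X * Z₁ - X) j i) * ((X * (Z₀ - Z₁)) j i) := by
  have hP : ∀ j, (X * Z₀ - X) j i = (X * Z₁ - X) j i + (X * (Z₀ - Z₁)) j i := fun j => by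
    rw [Matrix.mul_sub]
    simp only [Matrix.sub_apply]
    ring
  have h1 : ∑ j, ((X * Z₀ - X) j i) ^ 2 =
      ∑ j, (((X * Z₁ - X) j i) + ((X * (Z₀ - Z₁)) j i)) ^ 2 :=
    Finset.sum_congr rfl fun j _ => by rw [hP j]
  have h2 : ∀ j, (((X * Z₁ - X) j i) + ((X * (Z₀ - Z₁)) j i)) ^ 2 =
      ((X * Z₁ - X) j i) ^ 2 + (((X * (Z₀ - Z₁)) j i) ^ 2 +
        2 * (((X * Z₁ - X) j i) * ((X * (Z₀ - Z₁)) j i))) := fun j => by ring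
  rw [h1, Finset.sum_congr rfl fun j _ => h2 j, Finset.sum_add_distrib, Finset.sum_add_distrib,
    Finset.mul_sum]
  ring

lemma c2_eq {d : ℕ} (X Q : Matrix (Fin d) (Fin n) ℝ) (w : Fin n → ℝ)
    (Δ : Matrix (Fin n) (Fin n) ℝ) :
    ((Xᵀ * (Q * diagonal w))ᵀ * Δ).trace = ∑ i, w i * ∑ j, Q j i * ((X * Δ) j i) := by
  rw [Matrix.transpose_mul, Matrix.transpose_transpose, Matrix.mul_assoc, frob_eq]
  rw [Finset.sum_comm]
  refine Finset.sum_congr rfl fun i _ => ?_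
  rw [Finset.mul_sum]
  refine Finset.sum_congr rfl fun j _ => ?_
  rw [Matrix.mul_diagonal]
  ring

set_option maxHeartbeats 2000000 in
lemma step {d n : ℕ} (X : Matrix (Fin d) (Fin n) ℝ) (lam p q μ : ℝ)
    (hlam : 0 < lam) (hμ : 0 < μ) (hp0 : 0 < p) (hp2 : p < 2) (hq0 : 0 < q) (hq2 : q < 2)
    (Z₀ Z₁ : Matrix (Fin n) (Fin n) ℝ)
    (hup : p • (Z₁ * mpow (Z₀ᵀ * Z₀ + μ ^ 2 • (1 : Matrix (Fin n) (Fin n) ℝ)) (p / 2 - 1)) +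
      (lam * q) • (Xᵀ * ((X * Z₁ - X) *
        Matrix.diagonal fun i => (∑ j, ((X * Z₀ - X) j i) ^ 2 + μ ^ 2) ^ (q / 2 - 1))) = 0)
    (D θ : ℝ) (hD0 : 0 < D) (hθD : θ ≤ D ^ ((p - 2) / p)) (hθD2 : θ ≤ (D / lam) ^ ((q - 2) / q))
    (hJ : smoothJ X lam p q Z₀ μ ≤ D) :
    θ / 2 * (p * (∑ i, ∑ j, ((Z₀ - Z₁) i j) ^ 2) +
        lam * q * (∑ i, ∑ j, ((X * (Z₀ - Z₁)) i j) ^ 2)) ≤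
      smoothJ X lam p q Z₀ μ - smoothJ X lam p q Z₁ μ := by
  have hA₀ : (Z₀ᵀ * Z₀ + μ ^ 2 • (1 : Matrix (Fin n) (Fin n) ℝ)).IsHermitian := herm_aux Z₀ _
  have hA₁ : (Z₁ᵀ * Z₁ + μ ^ 2 • (1 : Matrix (Fin n) (Fin n) ℝ)).IsHermitian := herm_aux Z₁ _
  have hμ2 : (0:ℝ) < μ ^ 2 := pow_pos hμ 2
  have hα : ∀ i, 0 < hA₀.eigenvalues i := fun i => lt_of_lt_of_le hμ2 (eig_lower hA₀ i)
  have hβ : ∀ i, 0 < hA₁.eigenvalues i := fun i => lt_of_lt_of_le hμ2 (eig_lower hA₁ i)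
  have hb₀ : ∀ i, (0:ℝ) < ∑ j, ((X * Z₀ - X) j i) ^ 2 + μ ^ 2 := fun i =>
    add_pos_of_nonneg_of_pos (Finset.sum_nonneg fun j _ => sq_nonneg _) hμ2
  have hb₁ : ∀ i, (0:ℝ) < ∑ j, ((X * Z₁ - X) j i) ^ 2 + μ ^ 2 := fun i =>
    add_pos_of_nonneg_of_pos (Finset.sum_nonneg fun j _ => sq_nonneg _) hμ2
  -- J formulas
  have hJ0 : smoothJ X lam p q Z₀ μ = (∑ i, hA₀.eigenvalues i ^ (p/2)) +
      lam * ∑ i, (∑ j, ((X * Z₀ - X) j i) ^ 2 + μ ^ 2) ^ (q/2) := by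
    unfold smoothJ
    rw [mpow_eq hA₀, trace_cfc]
  have hJ1 : smoothJ X lam p q Z₁ μ = (∑ i, hA₁.eigenvalues i ^ (p/2)) +
      lam * ∑ i, (∑ j, ((X * Z₁ - X) j i) ^ 2 + μ ^ 2) ^ (q/2) := by
    unfold smoothJ
    rw [mpow_eq hA₁, trace_cfc]
  -- bounds on eigenvalues and weights
  have hTr0_nonneg : (0:ℝ) ≤ ∑ i, hA₀.eigenvalues i ^ (p/2) :=
    Finset.sum_nonneg fun i _ => Real.rpow_nonneg (hα i).le _
  have hbsum_nonneg : (0:ℝ) ≤ lam * ∑ i, (∑ j, ((X * Z₀ - X) j i) ^ 2 + μ ^ 2) ^ (q/2) :=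
    mul_nonneg hlam.le (Finset.sum_nonneg fun i _ => Real.rpow_nonneg (hb₀ i).le _)
  have hkey0 : (∑ i, hA₀.eigenvalues i ^ (p/2)) +
      lam * ∑ i, (∑ j, ((X * Z₀ - X) j i) ^ 2 + μ ^ 2) ^ (q/2) ≤ D := by
    rw [← hJ0]; exact hJ
  have hm : ∀ i, θ ≤ hA₀.eigenvalues i ^ (p/2 - 1) := by
    intro i
    have h1 : hA₀.eigenvalues i ^ (p/2) ≤ ∑ k, hA₀.eigenvalues k ^ (p/2) :=
      Finset.single_le_sum (fun k _ => Real.rpow_nonneg (hα k).le _) (Finset.mem_univ i)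
    have h2 : hA₀.eigenvalues i ^ (p/2) ≤ D := by linarith
    have h3 := rpow_lower_bound hD0 (hα i) (by linarith : (0:ℝ) < p/2) (by linarith) h2
    have he : D ^ ((p/2 - 1)/(p/2)) = D ^ ((p - 2)/p) := by
      congr 1
      field_simp
    rw [he] at h3
    linarith
  have hw : ∀ i, θ ≤ (∑ j, ((X * Z₀ - X) j i) ^ 2 + μ ^ 2) ^ (q/2 - 1) := by
    intro i
    have h1 : (∑ j, ((X * Z₀ - X) j i) ^ 2 + μ ^ 2) ^ (q/2) ≤
        ∑ k, (∑ j, ((X * Z₀ - X) j k) ^ 2 + μ ^ 2) ^ (q/2) :=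
      Finset.single_le_sum (fun k _ => Real.rpow_nonneg (hb₀ k).le _) (Finset.mem_univ i)
    have h2 : (∑ j, ((X * Z₀ - X) j i) ^ 2 + μ ^ 2) ^ (q/2) ≤ D / lam := by
      rw [le_div_iff₀ hlam]
      have h3 := mul_le_mul_of_nonneg_left h1 hlam.le
      rw [mul_comm]
      linarith
    have h3 := rpow_lower_bound (div_pos hD0 hlam) (hb₀ i) (by linarith : (0:ℝ) < q/2)
      (by linarith) h2
    have he : (D/lam) ^ ((q/2 - 1)/(q/2)) = (D/lam) ^ ((q - 2)/q) := by
      congr 1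
      field_simp
    rw [he] at h3
    linarith
  -- abbreviations (plain terms)
  have hM : mpow (Z₀ᵀ * Z₀ + μ ^ 2 • (1 : Matrix (Fin n) (Fin n) ℝ)) (p / 2 - 1) =
      hA₀.cfc (fun x : ℝ => x ^ (p/2 - 1)) := mpow_eq hA₀ _
  have hMt : (hA₀.cfc (fun x : ℝ => x ^ (p/2 - 1)))ᵀ = hA₀.cfc (fun x : ℝ => x ^ (p/2 - 1)) :=
    cfc_transpose hA₀ _
  -- stationarity pairing
  have hup' : p • (Z₁ * hA₀.cfc (fun x : ℝ => x ^ (p/2 - 1))) +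
      (lam * q) • (Xᵀ * ((X * Z₁ - X) *
        Matrix.diagonal fun i => (∑ j, ((X * Z₀ - X) j i) ^ 2 + μ ^ 2) ^ (q / 2 - 1))) = 0 := by
    rw [← hM]; exact hup
  have hstat : p * ((Z₁ * hA₀.cfc (fun x : ℝ => x ^ (p/2 - 1)))ᵀ * (Z₀ - Z₁)).trace +
      (lam * q) * ((Xᵀ * ((X * Z₁ - X) * Matrix.diagonal fun i =>
        (∑ j, ((X * Z₀ - X) j i) ^ 2 + μ ^ 2) ^ (q / 2 - 1)))ᵀ * (Z₀ - Z₁)).trace = 0 := by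
    have h := congrArg (fun (P : Matrix (Fin n) (Fin n) ℝ) => (Pᵀ * (Z₀ - Z₁)).trace) hup'
    simpa only [Matrix.transpose_add, Matrix.transpose_smul, Matrix.add_mul, Matrix.smul_mul,
      Matrix.trace_add, Matrix.trace_smul, smul_eq_mul, Matrix.transpose_zero, Matrix.zero_mul,
      Matrix.trace_zero] using h
  -- Klein inequality
  have htan : ∀ i j, (fun x : ℝ => x ^ (p/2)) (hA₁.eigenvalues j) ≤
      (fun x : ℝ => x ^ (p/2)) (hA₀.eigenvalues i) +
      (fun x : ℝ => (p/2) * x ^ (p/2 - 1)) (hA₀.eigenvalues i) *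
        (hA₁.eigenvalues j - hA₀.eigenvalues i) := fun i j =>
    rpow_tangent (by linarith) (by linarith) (hα i) (hβ j)
  have hKlein := klein hA₀ hA₁ (fun x : ℝ => x ^ (p/2)) (fun x : ℝ => (p/2) * x ^ (p/2 - 1)) htan
  rw [cfcR_const_mul hA₀ (p/2) (fun x : ℝ => x ^ (p/2 - 1))] at hKlein
  have hsub : (Z₁ᵀ * Z₁ + μ ^ 2 • (1 : Matrix (Fin n) (Fin n) ℝ)) -
      (Z₀ᵀ * Z₀ + μ ^ 2 • (1 : Matrix (Fin n) (Fin n) ℝ)) = -(Z₀ᵀ * Z₀ - Z₁ᵀ * Z₁) := by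
    abel
  rw [hsub] at hKlein
  have hE : ((-(Z₀ᵀ * Z₀ - Z₁ᵀ * Z₁)) * ((p/2) • hA₀.cfc (fun x : ℝ => x ^ (p/2 - 1)))).trace =
      -((p/2) * (((Z₀ - Z₁) * hA₀.cfc (fun x : ℝ => x ^ (p/2 - 1)) * (Z₀ - Z₁)ᵀ).trace +
        2 * ((Z₁ * hA₀.cfc (fun x : ℝ => x ^ (p/2 - 1)))ᵀ * (Z₀ - Z₁)).trace)) := by
    rw [Matrix.neg_mul, Matrix.trace_neg, Matrix.mul_smul, Matrix.trace_smul, smul_eq_mul,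
      trace_expand Z₀ Z₁ _ hMt]
  rw [hE] at hKlein
  rw [trace_cfc hA₀, trace_cfc hA₁] at hKlein
  -- quadratic lower bounds
  have hquadp : θ * ∑ i, ∑ j, ((Z₀ - Z₁) i j) ^ 2 ≤
      ((Z₀ - Z₁) * hA₀.cfc (fun x : ℝ => x ^ (p/2 - 1)) * (Z₀ - Z₁)ᵀ).trace :=
    quad_lower hA₀ _ θ hm (Z₀ - Z₁)
  have hquadq : θ * ∑ i, ∑ j, ((X * (Z₀ - Z₁)) j i) ^ 2 ≤
      ∑ i, (∑ j, ((X * Z₀ - X) j i) ^ 2 + μ ^ 2) ^ (q/2 - 1) *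
        ∑ j, ((X * (Z₀ - Z₁)) j i) ^ 2 := by
    rw [Finset.mul_sum]
    exact Finset.sum_le_sum fun i _ => mul_le_mul_of_nonneg_right (hw i)
      (Finset.sum_nonneg fun j _ => sq_nonneg _)
  -- q-part tangent sum
  have hqt : ∀ i, (q/2) * ((∑ j, ((X * Z₀ - X) j i) ^ 2 + μ ^ 2) ^ (q/2 - 1) *
      ((∑ j, ((X * Z₀ - X) j i) ^ 2 + μ ^ 2) - (∑ j, ((X * Z₁ - X) j i) ^ 2 + μ ^ 2))) ≤
      (∑ j, ((X * Z₀ - X) j i) ^ 2 + μ ^ 2) ^ (q/2) -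
      (∑ j, ((X * Z₁ - X) j i) ^ 2 + μ ^ 2) ^ (q/2) := by
    intro i
    have h := rpow_tangent (s := q/2) (a := ∑ j, ((X * Z₀ - X) j i) ^ 2 + μ ^ 2)
      (b := ∑ j, ((X * Z₁ - X) j i) ^ 2 + μ ^ 2) (by linarith) (by linarith) (hb₀ i) (hb₁ i)
    nlinarith [h]
  have hqsum : (q/2) * ∑ i, ((∑ j, ((X * Z₀ - X) j i) ^ 2 + μ ^ 2) ^ (q/2 - 1) *
      ((∑ j, ((X * Z₀ - X) j i) ^ 2 + μ ^ 2) - (∑ j, ((X * Z₁ - X) j i) ^ 2 + μ ^ 2))) ≤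
      (∑ i, (∑ j, ((X * Z₀ - X) j i) ^ 2 + μ ^ 2) ^ (q/2)) -
      ∑ i, (∑ j, ((X * Z₁ - X) j i) ^ 2 + μ ^ 2) ^ (q/2) := by
    rw [Finset.mul_sum, ← Finset.sum_sub_distrib]
    exact Finset.sum_le_sum fun i _ => hqt i
  -- rewrite the weighted difference using coldiff and c2_eq
  have hwd : ∑ i, ((∑ j, ((X * Z₀ - X) j i) ^ 2 + μ ^ 2) ^ (q/2 - 1) *
      ((∑ j, ((X * Z₀ - X) j i) ^ 2 + μ ^ 2) - (∑ j, ((X * Z₁ - X) j i) ^ 2 + μ ^ 2))) =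
      (∑ i, (∑ j, ((X * Z₀ - X) j i) ^ 2 + μ ^ 2) ^ (q/2 - 1) *
        ∑ j, ((X * (Z₀ - Z₁)) j i) ^ 2) +
      2 * ((Xᵀ * ((X * Z₁ - X) * Matrix.diagonal fun i =>
        (∑ j, ((X * Z₀ - X) j i) ^ 2 + μ ^ 2) ^ (q / 2 - 1)))ᵀ * (Z₀ - Z₁)).trace := by
    rw [c2_eq]
    rw [Finset.mul_sum, ← Finset.sum_add_distrib]
    refine Finset.sum_congr rfl fun i _ => ?_
    rw [coldiff X Z₀ Z₁ μ i]
    ring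
  -- index swap for the q-quadratic sum
  have hswap : ∑ i, ∑ j, ((X * (Z₀ - Z₁)) j i) ^ 2 = ∑ i, ∑ j, ((X * (Z₀ - Z₁)) i j) ^ 2 :=
    Finset.sum_comm
  -- final assembly
  rw [hswap] at hquadq
  rw [hwd] at hqsum
  have hC := mul_le_mul_of_nonneg_left hqsum hlam.le
  have hA2 := mul_le_mul_of_nonneg_left hquadp (show (0:ℝ) ≤ p/2 by linarith)
  have hB2 := mul_le_mul_of_nonneg_left hquadq (show (0:ℝ) ≤ lam*q/2 by positivity)
  rw [hJ0, hJ1]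
  linarith [hKlein, hstat, hC, hA2, hB2]

/-- Sufficient decrease: if the sequence `(Z_t)` satisfies the IRLS update equation for every
`t`, then with `D = J(Z_1, μ)` and `θ = min{D^{(p−2)/p}, (D/λ)^{(q−2)/q}} > 0` we have, for
every `t`, `J(Z_t, μ) − J(Z_{t+1}, μ) ≥ (θ/2)·(p‖Z_t − Z_{t+1}‖_F² + λq‖X(Z_t − Z_{t+1})‖_F²)`
(Frobenius norms written as sums of squared entries). -/
theorem stmt_15 {d n : ℕ} (hn : 1 ≤ n) (X : Matrix (Fin d) (Fin n) ℝ) (lam p q μ : ℝ)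
    (hlam : 0 < lam) (hμ : 0 < μ) (hp0 : 0 < p) (hp2 : p < 2) (hq0 : 0 < q) (hq2 : q < 2)
    (Z : ℕ → Matrix (Fin n) (Fin n) ℝ)
    (hupd : ∀ t, p • (Z (t + 1) *
        mpow ((Z t)ᵀ * Z t + μ ^ 2 • (1 : Matrix (Fin n) (Fin n) ℝ)) (p / 2 - 1)) +
      (lam * q) • (Xᵀ * ((X * Z (t + 1) - X) *
        Matrix.diagonal fun i => (∑ j, ((X * Z t - X) j i) ^ 2 + μ ^ 2) ^ (q / 2 - 1))) = 0)
    (D θ : ℝ) (hD : D = smoothJ X lam p q (Z 0) μ)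
    (hθ : θ = min (D ^ ((p - 2) / p)) ((D / lam) ^ ((q - 2) / q))) :
    0 < θ ∧ ∀ t,
      θ / 2 * (p * (∑ i, ∑ j, ((Z t - Z (t + 1)) i j) ^ 2) +
          lam * q * (∑ i, ∑ j, ((X * (Z t - Z (t + 1))) i j) ^ 2)) ≤
        smoothJ X lam p q (Z t) μ - smoothJ X lam p q (Z (t + 1)) μ := by
  have hne : Nonempty (Fin n) := ⟨⟨0, hn⟩⟩
  have hμ2 : (0:ℝ) < μ ^ 2 := pow_pos hμ 2
  have hD0 : 0 < D := by
    rw [hD]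
    have hA : ((Z 0)ᵀ * Z 0 + μ ^ 2 • (1 : Matrix (Fin n) (Fin n) ℝ)).IsHermitian :=
      herm_aux (Z 0) _
    unfold smoothJ
    rw [mpow_eq hA, trace_cfc]
    have h1 : (0:ℝ) ≤ ∑ i, hA.eigenvalues i ^ (p/2) :=
      Finset.sum_nonneg fun i _ => Real.rpow_nonneg
        (le_trans hμ2.le (eig_lower hA i)) _
    have h2 : (0:ℝ) < ∑ i, (∑ j, ((X * Z 0 - X) j i) ^ 2 + μ ^ 2) ^ (q/2) := by
      apply Finset.sum_pos (fun i _ => Real.rpow_pos_of_pos ?_ _) Finset.univ_nonempty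
      exact add_pos_of_nonneg_of_pos (Finset.sum_nonneg fun j _ => sq_nonneg _) hμ2
    have := mul_pos hlam h2
    linarith
  have hθ0 : 0 < θ := by
    rw [hθ]
    exact lt_min (Real.rpow_pos_of_pos hD0 _) (Real.rpow_pos_of_pos (div_pos hD0 hlam) _)
  have hθD : θ ≤ D ^ ((p - 2) / p) := hθ ▸ min_le_left _ _
  have hθD2 : θ ≤ (D / lam) ^ ((q - 2) / q) := hθ ▸ min_le_right _ _
  have hJle : ∀ t, smoothJ X lam p q (Z t) μ ≤ D := by
    intro t
    induction t with
    | zero => exact le_of_eq hD.symm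
    | succ t ih =>
      have hstep := step X lam p q μ hlam hμ hp0 hp2 hq0 hq2 (Z t) (Z (t + 1)) (hupd t)
        D θ hD0 hθD hθD2 ih
      have hnn : (0:ℝ) ≤ θ / 2 * (p * (∑ i, ∑ j, ((Z t - Z (t + 1)) i j) ^ 2) +
          lam * q * (∑ i, ∑ j, ((X * (Z t - Z (t + 1))) i j) ^ 2)) := by
        apply mul_nonneg (by linarith)
        apply add_nonneg
        · exact mul_nonneg hp0.le (Finset.sum_nonneg fun i _ =>
            Finset.sum_nonneg fun j _ => sq_nonneg _)
        · exact mul_nonneg (mul_nonneg hlam.le hq0.le) (Finset.sum_nonneg fun i _ =>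
            Finset.sum_nonneg fun j _ => sq_nonneg _)
      linarith
  refine ⟨hθ0, fun t => ?_⟩
  exact step X lam p q μ hlam hμ hp0 hp2 hq0 hq2 (Z t) (Z (t + 1)) (hupd t)
    D θ hD0 hθD hθD2 (hJle t)
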